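/- Let ω > 0 and m ≥ 1, and for λ > 0 define B_λ : [0, ∞) → ℝ by B_λ(x) = (1 + λ^{−1} e^{−x²ω²/2})² (1 + x^{2m}). If for each λ ∈ (0, 1), x₀(λ) is a global minimizer of B_λ on [0, ∞), then lim_{λ→0⁺} B_λ(x₀(λ)) / x₀(λ)^{2m} = 1; that is, the minimum value of B_λ is asymptotically equivalent to x₀(λ)^{2m} as λ → 0⁺. -/

import Mathlib

open Real Filter Topology

set_option maxHeartbeats 1600000

/-- If `x₀(λ)` is a global minimizer over `[0,∞)` of
`B_λ(x) = (1 + λ⁻¹ e^{−x²ω²/2})² (1 + x^{2m})` for each `λ ∈ (0,1)`, then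
`B_λ(x₀(λ)) ∼ x₀(λ)^{2m}` as `λ → 0⁺`. -/
theorem stmt_12 (ω m : ℝ) (hω : 0 < ω) (hm : 1 ≤ m)
    (B : ℝ → ℝ → ℝ)
    (hB : ∀ lam x, B lam x =
      (1 + lam⁻¹ * Real.exp (-x ^ 2 * ω ^ 2 / 2)) ^ 2 * (1 + x ^ (2 * m)))
    (x₀ : ℝ → ℝ)
    (hx₀ : ∀ lam ∈ Set.Ioo (0 : ℝ) 1, x₀ lam ∈ Set.Ici (0 : ℝ) ∧
      ∀ x ∈ Set.Ici (0 : ℝ), B lam (x₀ lam) ≤ B lam x) :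
    Tendsto (fun lam : ℝ => B lam (x₀ lam) / (x₀ lam) ^ (2 * m))
      (nhdsWithin 0 (Set.Ioi 0)) (nhds 1) := by
  have hm0 : (0:ℝ) < m := lt_of_lt_of_le one_pos hm
  set l : Filter ℝ := nhdsWithin 0 (Set.Ioi 0) with hl
  have hmem : ∀ᶠ lam in l, lam ∈ Set.Ioo (0:ℝ) 1 := by
    rw [eventually_iff_exists_mem]
    exact ⟨Set.Ioo 0 1, Ioo_mem_nhdsGT_of_mem (by constructor <;> norm_num), fun x hx => hx⟩
  -- the "Gaussian factor" at the minimizer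
  set u : ℝ → ℝ := fun lam => lam⁻¹ * Real.exp (-(x₀ lam) ^ 2 * ω ^ 2 / 2) with hu_def
  -- value of B at the minimizer
  have hBval : ∀ lam ∈ Set.Ioo (0:ℝ) 1,
      B lam (x₀ lam) = (1 + u lam) ^ 2 * (1 + (x₀ lam) ^ (2*m)) := by
    intro lam hlam; rw [hB]
  -- log of 1/lam tends to infinity
  have hlog : Tendsto (fun lam : ℝ => Real.log lam⁻¹) l atTop := by
    have := tendsto_neg_atBot_atTop.comp Real.tendsto_log_nhdsGT_zero
    simpa [Function.comp_def, Real.log_inv] using this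
  have hexp2 : ∀ lam ∈ Set.Ioo (0:ℝ) 1, Real.exp (-(2 * Real.log lam⁻¹)) = lam ^ 2 := by
    intro lam hlam
    rw [Real.log_inv, show -(2 * -Real.log lam) = Real.log lam + Real.log lam by ring,
      Real.exp_add, Real.exp_log hlam.1]; ring
  -- Claim 1 : x₀ tends to infinity
  have hx_top : Tendsto x₀ l atTop := by
    rw [tendsto_atTop]
    intro M
    set M' : ℝ := max M 1 with hM'
    have hM'1 : (1:ℝ) ≤ M' := le_max_right _ _
    set c : ℝ := Real.exp (-(M' ^ 2 * ω ^ 2)) with hc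
    have hc0 : 0 < c := Real.exp_pos _
    -- the comparison quantity tends to 0
    have h1 : Tendsto (fun lam : ℝ => lam ^ 2 * (Real.log lam⁻¹) ^ m) l (𝓝 0) := by
      have hbase := tendsto_rpow_mul_exp_neg_mul_atTop_nhds_zero m 2 (by norm_num)
      have hcomp := hbase.comp hlog
      apply hcomp.congr'
      filter_upwards [hmem] with lam hlam
      simp only [Function.comp]
      rw [show -2 * Real.log lam⁻¹ = -(2 * Real.log lam⁻¹) by ring, hexp2 lam hlam]
      ring
    have hg : Tendsto (fun lam : ℝ =>
        lam ^ 2 * (1 + lam) ^ 2 * (1 + (4 * Real.log lam⁻¹ / ω ^ 2) ^ m)) l (𝓝 0) := by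
      have hA : Tendsto (fun lam : ℝ => (1 + lam) ^ 2) l (𝓝 1) := by
        have h : Continuous fun lam : ℝ => (1 + lam) ^ 2 := by continuity
        simpa using (h.tendsto 0).mono_left nhdsWithin_le_nhds
      have hB2 : Tendsto (fun lam : ℝ => lam ^ 2) l (𝓝 0) := by
        have h : Continuous fun lam : ℝ => lam ^ 2 := by continuity
        simpa using (h.tendsto 0).mono_left nhdsWithin_le_nhds
      have hmain : Tendsto (fun lam : ℝ =>
          (1 + lam) ^ 2 * (lam ^ 2 + (4 / ω ^ 2) ^ m * (lam ^ 2 * (Real.log lam⁻¹) ^ m)))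
          l (𝓝 0) := by
        have t1 : Tendsto (fun lam : ℝ =>
            (4 / ω ^ 2) ^ m * (lam ^ 2 * (Real.log lam⁻¹) ^ m)) l (𝓝 0) := by
          simpa using h1.const_mul ((4 / ω ^ 2) ^ m)
        have t2 : Tendsto (fun lam : ℝ =>
            lam ^ 2 + (4 / ω ^ 2) ^ m * (lam ^ 2 * (Real.log lam⁻¹) ^ m)) l (𝓝 0) := by
          simpa using hB2.add t1
        simpa using hA.mul t2
      apply hmain.congr'
      filter_upwards [hmem] with lam hlam
      have hL0 : 0 ≤ Real.log lam⁻¹ := by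
        rw [Real.log_inv]
        linarith [Real.log_nonpos (le_of_lt hlam.1) hlam.2.le]
      have hsplit : (4 * Real.log lam⁻¹ / ω ^ 2) ^ m
          = (4 / ω ^ 2) ^ m * (Real.log lam⁻¹) ^ m := by
        rw [show 4 * Real.log lam⁻¹ / ω ^ 2 = (4 / ω ^ 2) * Real.log lam⁻¹ by ring,
          Real.mul_rpow (by positivity) hL0]
      rw [hsplit]; ring
    have hev : ∀ᶠ lam in l,
        lam ^ 2 * (1 + lam) ^ 2 * (1 + (4 * Real.log lam⁻¹ / ω ^ 2) ^ m) < c :=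
      hg.eventually_lt_const hc0
    filter_upwards [hmem, hev] with lam hlam hglam
    obtain ⟨ha0, hmin⟩ := hx₀ lam hlam
    simp only [Set.mem_Ici] at ha0
    have hlam0 : 0 < lam := hlam.1
    by_contra hcon
    push_neg at hcon
    have hcon' : x₀ lam < M' := lt_of_lt_of_le hcon (le_max_left _ _)
    -- test point y
    set L : ℝ := Real.log lam⁻¹ with hLdef
    have hL0 : 0 ≤ L := by
      rw [hLdef, Real.log_inv]
      linarith [Real.log_nonpos (le_of_lt hlam.1) hlam.2.le]
    set y : ℝ := Real.sqrt (4 * L / ω ^ 2) with hy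
    have hy0 : 0 ≤ y := Real.sqrt_nonneg _
    have hy2 : y ^ 2 = 4 * L / ω ^ 2 := Real.sq_sqrt (by positivity)
    have hBy : B lam y = (1 + lam) ^ 2 * (1 + (4 * L / ω ^ 2) ^ m) := by
      rw [hB]
      have hexp : Real.exp (-y ^ 2 * ω ^ 2 / 2) = lam ^ 2 := by
        rw [hy2, show -(4 * L / ω ^ 2) * ω ^ 2 / 2 = -(2 * L) by field_simp; ring]
        exact hexp2 lam hlam
      have hyp : y ^ (2 * m) = (4 * L / ω ^ 2) ^ m := by
        rw [Real.rpow_mul hy0, show y ^ (2:ℝ) = y ^ (2:ℕ) by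
          rw [← Real.rpow_natCast y 2]; norm_num, hy2]
      rw [hexp, hyp]
      have hne : lam ≠ 0 := ne_of_gt hlam.1
      have : lam⁻¹ * lam ^ 2 = lam := by
        rw [pow_two, ← mul_assoc, inv_mul_cancel₀ hne, one_mul]
      rw [this]
    have hBa : B lam (x₀ lam) = (1 + u lam) ^ 2 * (1 + (x₀ lam) ^ (2*m)) := hBval lam hlam
    have hle := hmin y hy0
    -- lower bound on B at the minimizer
    have hub : lam⁻¹ * Real.exp (-(M' ^ 2) * ω ^ 2 / 2) ≤ u lam := by
      apply mul_le_mul_of_nonneg_left _ (by positivity)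
      apply Real.exp_le_exp.2
      have : (x₀ lam) ^ 2 ≤ M' ^ 2 := by nlinarith
      nlinarith
    have hP0 : 0 ≤ (x₀ lam) ^ (2*m) := Real.rpow_nonneg ha0 _
    have hv0 : 0 < lam⁻¹ * Real.exp (-(M' ^ 2) * ω ^ 2 / 2) := by positivity
    have hBa_lb : (lam⁻¹ * Real.exp (-(M' ^ 2) * ω ^ 2 / 2)) ^ 2 ≤ B lam (x₀ lam) := by
      rw [hBa]
      have h0u : 0 ≤ u lam := le_trans hv0.le hub
      calc (lam⁻¹ * Real.exp (-(M' ^ 2) * ω ^ 2 / 2)) ^ 2 ≤ (u lam) ^ 2 :=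
            pow_le_pow_left₀ hv0.le hub 2
        _ ≤ (1 + u lam) ^ 2 := pow_le_pow_left₀ h0u (by linarith) 2
        _ = (1 + u lam) ^ 2 * 1 := (mul_one _).symm
        _ ≤ (1 + u lam) ^ 2 * (1 + (x₀ lam) ^ (2*m)) := by
            apply mul_le_mul_of_nonneg_left (by linarith) (sq_nonneg _)
    -- combine and contradict
    have hexpsq : (Real.exp (-(M' ^ 2) * ω ^ 2 / 2)) ^ 2 = c := by
      rw [pow_two, ← Real.exp_add, hc]
      congr 1; ring
    have : (lam⁻¹) ^ 2 * c ≤ (1 + lam) ^ 2 * (1 + (4 * L / ω ^ 2) ^ m) := by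
      calc (lam⁻¹) ^ 2 * c = (lam⁻¹ * Real.exp (-(M' ^ 2) * ω ^ 2 / 2)) ^ 2 := by
            rw [mul_pow, hexpsq]
        _ ≤ B lam (x₀ lam) := hBa_lb
        _ ≤ B lam y := hle
        _ = _ := hBy
    have hfin : c ≤ lam ^ 2 * (1 + lam) ^ 2 * (1 + (4 * L / ω ^ 2) ^ m) := by
      have h2 := mul_le_mul_of_nonneg_left this (by positivity : (0:ℝ) ≤ lam ^ 2)
      have hne : lam ≠ 0 := ne_of_gt hlam0
      calc c = lam ^ 2 * ((lam⁻¹) ^ 2 * c) := by field_simp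
        _ ≤ lam ^ 2 * ((1 + lam) ^ 2 * (1 + (4 * L / ω ^ 2) ^ m)) := h2
        _ = _ := by ring
    exact absurd hglam (not_lt.2 hfin)
  -- Claim 2 : u tends to 0
  set q : ℝ := Real.exp (-(ω ^ 2 / 2)) with hq
  have hq0 : 0 < q := Real.exp_pos _
  have hq1 : q < 1 := by
    rw [hq, Real.exp_lt_one_iff]
    nlinarith [pow_pos hω 2]
  -- the key minimizer inequality
  have hkey : ∀ᶠ lam in l,
      (1 + u lam) ^ 2 ≤ (1 + q * u lam) ^ 2 * (1 + ((x₀ lam) ^ 2)⁻¹) ^ m := by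
    filter_upwards [hmem, hx_top.eventually (eventually_ge_atTop 1)] with lam hlam hge
    obtain ⟨ha0', hmin⟩ := hx₀ lam hlam
    have hlam0 : 0 < lam := hlam.1
    set a : ℝ := x₀ lam with hadef
    have ha0 : 0 < a := lt_of_lt_of_le one_pos hge
    set z : ℝ := Real.sqrt (a ^ 2 + 1) with hz
    have hz0 : 0 ≤ z := Real.sqrt_nonneg _
    have hz2 : z ^ 2 = a ^ 2 + 1 := Real.sq_sqrt (by positivity)
    have hle := hmin z hz0
    rw [hBval lam hlam, hB] at hle
    have hzexp : Real.exp (-z ^ 2 * ω ^ 2 / 2)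
        = Real.exp (-a ^ 2 * ω ^ 2 / 2) * q := by
      rw [hz2, hq, ← Real.exp_add]; ring_nf
    have hzp : z ^ (2 * m) = (a ^ 2 + 1) ^ m := by
      rw [Real.rpow_mul hz0, show z ^ (2:ℝ) = z ^ (2:ℕ) by
        rw [← Real.rpow_natCast z 2]; norm_num, hz2]
    rw [hzexp, hzp] at hle
    set K : ℝ := (1 + (a ^ 2)⁻¹) ^ m with hK
    have hK1 : 1 ≤ K := by
      rw [hK]
      calc (1:ℝ) = 1 ^ m := (Real.one_rpow m).symm
        _ ≤ (1 + (a ^ 2)⁻¹) ^ m := by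
            apply Real.rpow_le_rpow (by norm_num)
              (le_add_of_nonneg_right (by positivity)) (le_of_lt hm0)
    have hsplit : (a ^ 2 + 1) ^ m = a ^ (2 * m) * K := by
      rw [hK, show a ^ (2 * m) = (a ^ 2 : ℝ) ^ m by
        rw [Real.rpow_mul (le_of_lt ha0), show a ^ (2:ℝ) = a ^ (2:ℕ) by
          rw [← Real.rpow_natCast a 2]; norm_num],
        ← Real.mul_rpow (by positivity) (by positivity)]
      congr 1
      field_simp
    rw [hsplit] at hle
    have hP0 : 0 ≤ a ^ (2 * m) := Real.rpow_nonneg (le_of_lt ha0) _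
    have hqu0 : 0 ≤ 1 + q * (lam⁻¹ * Real.exp (-a ^ 2 * ω ^ 2 / 2)) := by positivity
    -- 1 + P*K ≤ K*(1+P)
    have hstep : (1 + lam⁻¹ * (Real.exp (-a ^ 2 * ω ^ 2 / 2) * q)) ^ 2 * (1 + a ^ (2*m) * K)
        ≤ (1 + q * u lam) ^ 2 * (K * (1 + a ^ (2*m))) := by
      have h1 : 1 + a ^ (2*m) * K ≤ K * (1 + a ^ (2*m)) := by
        have : K * (1 + a ^ (2*m)) = K + a ^ (2*m) * K := by ring
        rw [this]
        linarith
      have h2 : (1 + lam⁻¹ * (Real.exp (-a ^ 2 * ω ^ 2 / 2) * q))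
          = 1 + q * u lam := by rw [hu_def]; ring
      rw [h2]
      apply mul_le_mul_of_nonneg_left h1
      positivity
    have hle2 : (1 + u lam) ^ 2 * (1 + a ^ (2*m))
        ≤ ((1 + q * u lam) ^ 2 * K) * (1 + a ^ (2*m)) := by
      calc (1 + u lam) ^ 2 * (1 + a ^ (2*m)) ≤ _ := hle
        _ ≤ (1 + q * u lam) ^ 2 * (K * (1 + a ^ (2*m))) := hstep
        _ = ((1 + q * u lam) ^ 2 * K) * (1 + a ^ (2*m)) := by ring
    have hpos : 0 < 1 + a ^ (2*m) := by positivity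
    have := le_of_mul_le_mul_right (by linarith [hle2] : (1 + u lam) ^ 2 * (1 + a ^ (2*m)) ≤ ((1 + q * u lam) ^ 2 * K) * (1 + a ^ (2*m))) hpos
    calc (1 + u lam) ^ 2 ≤ (1 + q * u lam) ^ 2 * K := this
      _ = (1 + q * u lam) ^ 2 * (1 + (a ^ 2)⁻¹) ^ m := by rw [hK]
  have hu0 : ∀ᶠ lam in l, 0 ≤ u lam := by
    filter_upwards [hmem] with lam hlam
    have := hlam.1
    positivity
  have hKto : Tendsto (fun lam => (1 + ((x₀ lam) ^ 2)⁻¹) ^ m) l (𝓝 1) := by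
    have h2 : Tendsto (fun lam => 1 + ((x₀ lam) ^ 2)⁻¹) l (𝓝 1) := by
      have hsq : Tendsto (fun lam => (x₀ lam) ^ 2) l atTop :=
        (tendsto_pow_atTop (two_ne_zero)).comp hx_top
      simpa using hsq.inv_tendsto_atTop.const_add (1:ℝ)
    have hc : ContinuousAt (fun x : ℝ => x ^ m) 1 :=
      Real.continuousAt_rpow_const 1 m (Or.inl one_ne_zero)
    have := hc.tendsto.comp h2
    simpa [Function.comp_def, Real.one_rpow] using this
  have hu : Tendsto u l (𝓝 0) := by
    rw [tendsto_order]
    constructor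
    · intro b hb
      filter_upwards [hu0] with lam h
      linarith
    · intro ε hε
      have hc1 : 1 + q * ε < 1 + ε := by nlinarith
      have hs0 : (0:ℝ) < 1 + q * ε := by positivity
      have hcgt : 1 < ((1 + ε) / (1 + q * ε)) ^ 2 := by
        have h1 : 1 < (1 + ε) / (1 + q * ε) := (one_lt_div hs0).2 hc1
        nlinarith
      have hev := hKto.eventually_lt_const hcgt
      filter_upwards [hkey, hev, hu0] with lam h1 h2 h3
      by_contra hcon
      push_neg at hcon
      set U : ℝ := u lam with hU
      set K : ℝ := (1 + ((x₀ lam) ^ 2)⁻¹) ^ m with hKK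
      have hK0 : 0 ≤ K := Real.rpow_nonneg (by positivity) m
      have step1 : (1 + ε) * (1 + q * U) ≤ (1 + U) * (1 + q * ε) := by nlinarith
      have step2 : ((1 + ε) * (1 + q * U)) ^ 2 ≤ ((1 + U) * (1 + q * ε)) ^ 2 := by
        apply pow_le_pow_left₀ (by positivity) step1
      have step4 : K * (1 + q * ε) ^ 2 < (1 + ε) ^ 2 := by
        have := h2
        rw [div_pow] at this
        calc K * (1 + q * ε) ^ 2 < ((1 + ε) ^ 2 / (1 + q * ε) ^ 2) * (1 + q * ε) ^ 2 := by
              apply mul_lt_mul_of_pos_right this (by positivity)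
          _ = (1 + ε) ^ 2 := by field_simp
      have hp : (0:ℝ) < (1 + q * U) ^ 2 := by nlinarith
      nlinarith [step2, mul_lt_mul_of_pos_left step4 hp,
        mul_le_mul_of_nonneg_right h1 (sq_nonneg (1 + q * ε))]
  -- Final assembly
  have hPtop : Tendsto (fun lam => (x₀ lam) ^ (2 * m)) l atTop :=
    (tendsto_rpow_atTop (by positivity : (0:ℝ) < 2 * m)).comp hx_top
  have hfin : Tendsto (fun lam => (1 + u lam) ^ 2 * (1 + ((x₀ lam) ^ (2 * m))⁻¹)) l (𝓝 1) := by
    have h1 : Tendsto (fun lam => (1 + u lam) ^ 2) l (𝓝 1) := by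
      convert (hu.const_add (1:ℝ)).pow 2 using 2
      norm_num
    have h2 : Tendsto (fun lam => 1 + ((x₀ lam) ^ (2 * m))⁻¹) l (𝓝 1) := by
      simpa using hPtop.inv_tendsto_atTop.const_add (1:ℝ)
    have := h1.mul h2
    simpa using this
  apply hfin.congr'
  filter_upwards [hmem, hx_top.eventually (eventually_ge_atTop 1)] with lam hlam hge
  have ha0 : 0 < x₀ lam := lt_of_lt_of_le one_pos hge
  have hP : 0 < (x₀ lam) ^ (2 * m) := Real.rpow_pos_of_pos ha0 _
  rw [hBval lam hlam, mul_div_assoc]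
  congr 1
  rw [add_div, div_self (ne_of_gt hP), one_div, add_comm]
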